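/- Let V be a finite-dimensional real inner product space, let σ⁰ ∈ V with σ⁰ ≠ 0, and let W : V → ℝ be a continuous function with W(σ⁰) > 0. Let (cₙ) be a sequence of nonnegative real numbers with cₙ → 0, and for each n let Cₙ : V → V be a self-adjoint positive definite linear operator such that: (i) W(σ) ≤ ⟨σ, Cₙ⁻¹σ⟩ for every σ ∈ V; (ii) ⟨σ⁰, Cₙ⁻¹σ⁰⟩ ≤ W(σ⁰) + cₙ; (iii) ⟨e, Cₙe⟩ ≤ cₙ‖e‖² for every e ∈ V with ⟨e, σ⁰⟩ = 0. Then ⟨σ⁰, Cₙσ⁰⟩ converges to ‖σ⁰‖⁴ / W(σ⁰). -/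

import Mathlib

open scoped RealInnerProductSpace

/-- Generalized Cauchy–Schwarz for a self-adjoint positive-semidefinite operator. -/
lemma gen_cs {V : Type*} [NormedAddCommGroup V] [InnerProductSpace ℝ V]
    (T : V → V) (hlin : ∀ (s : ℝ) (u v : V), T (u + s • v) = T u + s • T v)
    (hsa : ∀ u v : V, ⟪T u, v⟫ = ⟪u, T v⟫)
    (hpos : ∀ u : V, 0 ≤ ⟪u, T u⟫) (x y : V) :
    ⟪x, T y⟫ ^ 2 ≤ ⟪x, T x⟫ * ⟪y, T y⟫ := by
  have key : ∀ s : ℝ, 0 ≤ ⟪y, T y⟫ * (s * s) + (2 * ⟪x, T y⟫) * s + ⟪x, T x⟫ := by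
    intro s
    have h := hpos (x + s • y)
    rw [hlin s x y] at h
    have hyx : ⟪y, T x⟫ = ⟪x, T y⟫ := by rw [← hsa y x, real_inner_comm]
    simp only [inner_add_left, inner_add_right, real_inner_smul_left,
      real_inner_smul_right, hyx] at h
    nlinarith [h]
  have hd := discrim_le_zero key
  rw [discrim] at hd
  nlinarith [hd]

/-- Coordinate-free form of (1.29): under the near-optimality hypotheses,
`⟪σ⁰, Cₙσ⁰⟫ → ‖σ⁰‖⁴ / W σ⁰`. -/
theorem energy_on_sigma0_tendsto
    {V : Type*} [NormedAddCommGroup V] [InnerProductSpace ℝ V] [FiniteDimensional ℝ V]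
    (σ0 : V) (hσ0 : σ0 ≠ 0)
    (W : V → ℝ) (hWcont : Continuous W) (hWpos : 0 < W σ0)
    (c : ℕ → ℝ) (hc_nonneg : ∀ n, 0 ≤ c n)
    (hc_lim : Filter.Tendsto c Filter.atTop (nhds 0))
    (C : ℕ → (V ≃ₗ[ℝ] V))
    (hC_sa : ∀ n, ∀ u v : V, ⟪(C n) u, v⟫ = ⟪u, (C n) v⟫)
    (hC_pd : ∀ n, ∀ u : V, u ≠ 0 → 0 < ⟪u, (C n) u⟫)
    (hbound : ∀ n, ∀ σ : V, W σ ≤ ⟪σ, (C n).symm σ⟫)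
    (hattain : ∀ n, ⟪σ0, (C n).symm σ0⟫ ≤ W σ0 + c n)
    (hsmall : ∀ n, ∀ e : V, ⟪e, σ0⟫ = 0 → ⟪e, (C n) e⟫ ≤ c n * ‖e‖ ^ 2) :
    Filter.Tendsto (fun n => ⟪σ0, (C n) σ0⟫) Filter.atTop
      (nhds (‖σ0‖ ^ 4 / W σ0)) := by
  classical
  set W0 := W σ0 with hW0def
  set t2 : ℝ := ‖σ0‖ ^ 2 with ht2def
  have ht2 : 0 < t2 := by
    have : 0 < ‖σ0‖ := norm_pos_iff.mpr hσ0
    positivity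
  set A : ℕ → ℝ := fun n => ⟪σ0, (C n) σ0⟫ with hAdef
  have hApos : ∀ n, 0 < A n := fun n => hC_pd n σ0 hσ0
  have hC_nonneg : ∀ n (u : V), 0 ≤ ⟪u, (C n) u⟫ := by
    intro n u
    rcases eq_or_ne u 0 with rfl | hu
    · simp
    · exact (hC_pd n u hu).le
  have hcs : ∀ n (x y : V), ⟪x, (C n) y⟫ ^ 2 ≤ ⟪x, (C n) x⟫ * ⟪y, (C n) y⟫ := by
    intro n
    refine gen_cs (fun v => (C n) v) ?_ (hC_sa n) (hC_nonneg n)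
    intro s u v; simp [map_add, map_smul]
  set b : ℕ → ℝ := fun n => ⟪σ0, (C n).symm σ0⟫ with hbdef
  have hbW : ∀ n, W0 ≤ b n := fun n => hbound n σ0
  have hbU : ∀ n, b n ≤ W0 + c n := hattain
  have hbpos : ∀ n, 0 < b n := fun n => lt_of_lt_of_le hWpos (hbW n)
  have hself : ⟪σ0, σ0⟫ = t2 := real_inner_self_eq_norm_sq σ0
  have hCsymm : ∀ n, ⟪(C n) σ0, (C n).symm σ0⟫ = t2 := by
    intro n
    rw [hC_sa n σ0 ((C n).symm σ0), (C n).apply_symm_apply, hself]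
  -- lower bound : t2^2 ≤ A n * b n
  have hlow : ∀ n, t2 ^ 2 ≤ A n * b n := by
    intro n
    have h := hcs n σ0 ((C n).symm σ0)
    rw [(C n).apply_symm_apply] at h
    have h2 : ⟪(C n).symm σ0, σ0⟫ = b n := real_inner_comm _ _
    rw [hself, h2] at h
    exact h
  have hlow' : ∀ n, t2 ^ 2 / (W0 + c n) ≤ A n := by
    intro n
    have hpos : 0 < W0 + c n := by linarith [hc_nonneg n]
    rw [div_le_iff₀ hpos]
    calc t2 ^ 2 ≤ A n * b n := hlow n
      _ ≤ A n * (W0 + c n) := by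
          exact mul_le_mul_of_nonneg_left (hbU n) (hApos n).le
  -- the fluctuation
  set x : ℕ → V := fun n => (t2 / A n) • ((C n) σ0) - σ0 with hxdef
  have hσx : ∀ n, σ0 + x n = (t2 / A n) • ((C n) σ0) := by
    intro n; simp [hxdef]
  have hxperp : ∀ n, ⟪x n, σ0⟫ = 0 := by
    intro n
    have hc0 : ⟪(C n) σ0, σ0⟫ = A n := by rw [real_inner_comm]
    simp only [hxdef, inner_sub_left, real_inner_smul_left, hc0, hself]
    rw [div_mul_cancel₀ t2 (hApos n).ne', sub_self]
  -- ⟪x n, C⁻¹ x n⟫ = b n - t2^2 / A n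
  have hxCinv : ∀ n, ⟪x n, (C n).symm (x n)⟫ = b n - t2 ^ 2 / A n := by
    intro n
    have hsx : (C n).symm (x n) = (t2 / A n) • σ0 - (C n).symm σ0 := by
      simp [hxdef, map_sub, map_smul]
    rw [hsx]
    simp only [hxdef, inner_sub_left, inner_sub_right, real_inner_smul_left,
      real_inner_smul_right]
    have h1 : ⟪(C n) σ0, σ0⟫ = A n := by rw [real_inner_comm]
    rw [h1, hCsymm n, hself]
    have hAne : A n ≠ 0 := (hApos n).ne'
    field_simp
    ring
  have hxCinv_nonneg : ∀ n, 0 ≤ ⟪x n, (C n).symm (x n)⟫ := by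
    intro n
    have := hC_nonneg n ((C n).symm (x n))
    rwa [(C n).apply_symm_apply, real_inner_comm] at this
  -- norm bound ‖x n‖^2 ≤ c n * b n
  have hxnorm : ∀ n, ‖x n‖ ^ 2 ≤ c n * b n := by
    intro n
    rcases eq_or_ne (x n) 0 with hx0 | hx0
    · rw [hx0]; simp
      exact mul_nonneg (hc_nonneg n) (hbpos n).le
    · have hxs : 0 < ‖x n‖ ^ 2 := by
        have : 0 < ‖x n‖ := norm_pos_iff.mpr hx0
        positivity
      have h4 : (‖x n‖ ^ 2) ^ 2 ≤ ⟪x n, (C n) (x n)⟫ * ⟪x n, (C n).symm (x n)⟫ := by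
        have h := hcs n (x n) ((C n).symm (x n))
        rw [(C n).apply_symm_apply, real_inner_self_eq_norm_sq] at h
        have hcomm : ⟪(C n).symm (x n), x n⟫ = ⟪x n, (C n).symm (x n)⟫ :=
          real_inner_comm _ _
        rw [hcomm] at h
        exact h
      have h5 : ⟪x n, (C n) (x n)⟫ ≤ c n * ‖x n‖ ^ 2 := hsmall n (x n) (hxperp n)
      have h6 : ⟪x n, (C n).symm (x n)⟫ ≤ b n := by
        rw [hxCinv n]
        have : 0 ≤ t2 ^ 2 / A n := div_nonneg (by positivity) (hApos n).le
        linarith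
      have h7 : (‖x n‖ ^ 2) ^ 2 ≤ (c n * ‖x n‖ ^ 2) * b n := by
        calc (‖x n‖ ^ 2) ^ 2 ≤ ⟪x n, (C n) (x n)⟫ * ⟪x n, (C n).symm (x n)⟫ := h4
          _ ≤ (c n * ‖x n‖ ^ 2) * b n := by
              exact mul_le_mul h5 h6 (hxCinv_nonneg n)
                (mul_nonneg (hc_nonneg n) (by positivity))
      have := le_of_mul_le_mul_right (by nlinarith [h7] : ‖x n‖ ^ 2 * ‖x n‖ ^ 2 ≤ (c n * b n) * ‖x n‖ ^ 2) hxs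
      exact this
  -- x n → 0
  have hxlim : Filter.Tendsto x Filter.atTop (nhds 0) := by
    rw [tendsto_zero_iff_norm_tendsto_zero]
    have hcb : Filter.Tendsto (fun n => c n * (W0 + c n)) Filter.atTop (nhds 0) := by
      have := hc_lim.mul (Filter.Tendsto.add (tendsto_const_nhds (x := W0)) hc_lim)
      simpa using this
    have hsq : Filter.Tendsto (fun n => Real.sqrt (c n * (W0 + c n))) Filter.atTop (nhds 0) := by
      have := (Real.continuous_sqrt.tendsto 0).comp hcb
      simpa [Function.comp_def] using this
    apply squeeze_zero' (Filter.Eventually.of_forall fun n => norm_nonneg _)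
      (Filter.Eventually.of_forall ?_) hsq
    intro n
    have h1 : ‖x n‖ ^ 2 ≤ c n * (W0 + c n) := by
      calc ‖x n‖ ^ 2 ≤ c n * b n := hxnorm n
        _ ≤ c n * (W0 + c n) := mul_le_mul_of_nonneg_left (hbU n) (hc_nonneg n)
    have := Real.sqrt_le_sqrt h1
    rwa [Real.sqrt_sq (norm_nonneg _)] at this
  -- W (σ0 + x n) → W0
  have hWlim : Filter.Tendsto (fun n => W (σ0 + x n)) Filter.atTop (nhds W0) := by
    have h1 : Filter.Tendsto (fun n => σ0 + x n) Filter.atTop (nhds σ0) := by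
      have := (Filter.Tendsto.add (tendsto_const_nhds (x := σ0)) hxlim)
      simpa using this
    exact (hWcont.tendsto σ0).comp h1
  have hWev : ∀ᶠ n in Filter.atTop, 0 < W (σ0 + x n) :=
    hWlim.eventually (eventually_gt_nhds hWpos)
  -- upper bound : A n * W (σ0 + x n) ≤ t2 ^ 2
  have hup : ∀ n, A n * W (σ0 + x n) ≤ t2 ^ 2 := by
    intro n
    have hAne : A n ≠ 0 := (hApos n).ne'
    have h2 : ⟪σ0 + x n, (C n).symm (σ0 + x n)⟫ = t2 ^ 2 / A n := by
      rw [hσx n, map_smul, (C n).symm_apply_apply, real_inner_smul_left,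
        real_inner_smul_right]
      have h3 : ⟪(C n) σ0, σ0⟫ = A n := by rw [real_inner_comm]
      rw [h3]
      field_simp
    have h1 : W (σ0 + x n) ≤ t2 ^ 2 / A n := h2 ▸ hbound n (σ0 + x n)
    calc A n * W (σ0 + x n) ≤ A n * (t2 ^ 2 / A n) :=
          mul_le_mul_of_nonneg_left h1 (hApos n).le
      _ = t2 ^ 2 := by rw [mul_comm, div_mul_cancel₀ _ hAne]
  have hupev : ∀ᶠ n in Filter.atTop, A n ≤ t2 ^ 2 / W (σ0 + x n) := by
    filter_upwards [hWev] with n hn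
    rw [le_div_iff₀ hn]
    exact hup n
  -- limits of bounds
  have hlowlim : Filter.Tendsto (fun n => t2 ^ 2 / (W0 + c n)) Filter.atTop
      (nhds (t2 ^ 2 / W0)) := by
    have hden : Filter.Tendsto (fun n => W0 + c n) Filter.atTop (nhds W0) := by
      have := (Filter.Tendsto.add (tendsto_const_nhds (x := W0)) hc_lim)
      simpa using this
    exact Filter.Tendsto.div tendsto_const_nhds hden hWpos.ne'
  have huplim : Filter.Tendsto (fun n => t2 ^ 2 / W (σ0 + x n)) Filter.atTop
      (nhds (t2 ^ 2 / W0)) :=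
    Filter.Tendsto.div tendsto_const_nhds hWlim hWpos.ne'
  have hfinal : Filter.Tendsto A Filter.atTop (nhds (t2 ^ 2 / W0)) :=
    tendsto_of_tendsto_of_tendsto_of_le_of_le' hlowlim huplim
      (Filter.Eventually.of_forall hlow') hupev
  have ht4 : t2 ^ 2 = ‖σ0‖ ^ 4 := by rw [ht2def]; ring
  rw [← ht4]
  exact hfinal
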